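/- Let a, b be real numbers with a < 0, b > 1, and suppose ln(-a)/ln(b) is a negative irrational number. Then the multiplicative semigroup {a^m * b^n : m, n ∈ ℕ} is dense in ℝ. -/

import Mathlib

open Real Set

/-- There exist arbitrarily small nonzero natural-number combinations `n*L + m*l`
when `L > 0`, `l < 0` and `l/L` is irrational. -/
lemma exists_small_comb {L l : ℝ} (hL : 0 < L) (hl : l < 0)
    (hirr : Irrational (l / L)) {ε : ℝ} (hε : 0 < ε) :
    ∃ t : ℝ, t ≠ 0 ∧ |t| < ε ∧ ∃ m n : ℕ, t = n * L + m * l := by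
  have hξ : 0 < -(l / L) := by
    have : l / L < 0 := div_neg_of_neg_of_pos hl hL
    linarith
  obtain ⟨N, hN⟩ := exists_nat_gt (L / ε)
  obtain ⟨j, k, hk0, hkN, hjk⟩ :=
    Real.exists_int_int_abs_mul_sub_le (-(l / L)) (n := N + 1) (Nat.succ_pos N)
  have hkR : (0 : ℝ) < (k : ℝ) := by exact_mod_cast hk0
  set t : ℝ := (j : ℝ) * L + (k : ℝ) * l with ht
  have key : (k : ℝ) * (-(l / L)) - j = -t / L := by
    field_simp
    ring
  have hjk' : |t| / L ≤ 1 / (N + 2) := by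
    have h1 : |(-t) / L| ≤ 1 / (N + 2) := by
      have hcast : ((N + 1 : ℕ) : ℝ) + 1 = (N : ℝ) + 2 := by push_cast; ring
      rw [← key]
      calc |(k:ℝ) * (-(l / L)) - j| ≤ 1 / ((N + 1 : ℕ) + 1) := hjk
        _ = 1 / ((N:ℝ) + 2) := by rw [hcast]
    rwa [abs_div, abs_neg, abs_of_pos hL] at h1
  have habs : |t| < ε := by
    have h2 : |t| ≤ L / (N + 2) := by
      rw [div_le_div_iff₀ hL (by positivity)] at hjk'
      rw [le_div_iff₀ (by positivity : (0:ℝ) < (N:ℝ) + 2)]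
      linarith
    have h3 : L / (N + 2) < ε := by
      rw [div_lt_iff₀ (by positivity : (0:ℝ) < (N:ℝ) + 2)]
      have : L / ε < N := hN
      rw [div_lt_iff₀ hε] at this
      nlinarith
    linarith
  have htne : t ≠ 0 := by
    intro h0
    apply hirr.neg
    refine ⟨(j : ℚ) / (k : ℚ), ?_⟩
    have hkne : (k : ℝ) ≠ 0 := hkR.ne'
    have : (k : ℝ) * (-(l / L)) - j = 0 := by rw [key, h0]; simp
    push_cast
    field_simp
    linarith [this]
  -- j ≥ 0
  have hjnn : 0 ≤ j := by
    by_contra hj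
    push_neg at hj
    have hjR : (j : ℝ) ≤ -1 := by exact_mod_cast Int.le_of_lt_add_one (by linarith [hj] : j < -1 + 1)
    have hkξ : 0 < (k : ℝ) * (-(l / L)) := mul_pos hkR hξ
    have h1 : 1 ≤ (k : ℝ) * (-(l / L)) - j := by linarith
    have h2 : |(k : ℝ) * (-(l / L)) - j| ≤ 1 / ((N + 1 : ℕ) + 1) := hjk
    have h3 : (1 : ℝ) / ((N + 1 : ℕ) + 1) < 1 := by
      rw [div_lt_one (by positivity)]
      push_cast; linarith
    have := le_abs_self ((k : ℝ) * (-(l / L)) - j)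
    linarith
  refine ⟨t, htne, habs, k.toNat, j.toNat, ?_⟩
  have hj' : ((j.toNat : ℕ) : ℝ) = (j : ℝ) := by exact_mod_cast Int.toNat_of_nonneg hjnn
  have hk' : ((k.toNat : ℕ) : ℝ) = (k : ℝ) := by exact_mod_cast Int.toNat_of_nonneg hk0.le
  rw [hj', hk']

/-- Natural-number combinations `n*L + m*l` are dense when `L > 0`, `l < 0`,
`l/L` irrational. -/
lemma dense_comb {L l : ℝ} (hL : 0 < L) (hl : l < 0) (hirr : Irrational (l / L)) :
    Dense {u : ℝ | ∃ m n : ℕ, u = n * L + m * l} := by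
  refine dense_of_exists_between fun p q hpq => ?_
  set ε := q - p with hε
  have hε0 : 0 < ε := by simp [hε]; linarith
  obtain ⟨t, htne, htabs, n₀, m₀, ht⟩ := exists_small_comb hL hl hirr hε0
  rcases htne.lt_or_gt with htn | htp
  · -- t < 0 : start high at N*L and step down
    obtain ⟨N, hN⟩ := exists_nat_gt (q / L)
    have hB : q < N * L := by
      rw [div_lt_iff₀ hL] at hN
      linarith
    set k : ℤ := ⌊(N * L - q) / (-t)⌋ + 1 with hk
    clear_value k
    have hknn : 0 ≤ k := by
      have : (0:ℝ) ≤ (N * L - q) / (-t) := div_nonneg (by linarith) (by linarith)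
      have := Int.le_floor.mpr (by exact_mod_cast this : ((0:ℤ):ℝ) ≤ (N * L - q) / (-t))
      omega
    have hfl := Int.floor_le ((N * L - q) / (-t))
    have hfl2 := Int.lt_floor_add_one ((N * L - q) / (-t))
    have hkt1 : N * L - q < (k : ℝ) * (-t) := by
      have : (N * L - q) / (-t) < k := by rw [hk]; push_cast; linarith
      calc N * L - q = ((N * L - q) / (-t)) * (-t) := by field_simp
        _ < k * (-t) := by apply mul_lt_mul_of_pos_right this (by linarith)
    have hkt2 : (k : ℝ) * (-t) ≤ N * L - q + (-t) := by
      have hkle : (k : ℝ) ≤ (N * L - q) / (-t) + 1 := by rw [hk]; push_cast; linarith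
      calc (k : ℝ) * (-t) ≤ ((N * L - q) / (-t) + 1) * (-t) :=
            mul_le_mul_of_nonneg_right hkle (by linarith)
        _ = N * L - q + (-t) := by
            rw [add_mul, div_mul_cancel₀ _ (by linarith : (-t) ≠ 0), one_mul]
    refine ⟨N * L + k * t, ⟨k.toNat * n₀, N + k.toNat * m₀, ?_⟩, ?_, ?_⟩
    · have hk' : ((k.toNat : ℕ) : ℝ) = (k : ℝ) := by exact_mod_cast Int.toNat_of_nonneg hknn
      push_cast
      rw [hk', ht]; ring
    · have : |t| = -t := abs_of_neg htn
      linarith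
    · linarith
  · -- t > 0 : start low at M*l and step up
    obtain ⟨M, hM⟩ := exists_nat_gt (p / l)
    have hB : M * l < p := by
      rw [div_lt_iff_of_neg hl] at hM
      linarith
    set k : ℤ := ⌊(p - M * l) / t⌋ + 1 with hk
    clear_value k
    have hknn : 0 ≤ k := by
      have : (0:ℝ) ≤ (p - M * l) / t := div_nonneg (by linarith) (by linarith)
      have := Int.le_floor.mpr (by exact_mod_cast this : ((0:ℤ):ℝ) ≤ (p - M * l) / t)
      omega
    have hfl := Int.floor_le ((p - M * l) / t)
    have hfl2 := Int.lt_floor_add_one ((p - M * l) / t)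
    have hkt1 : p - M * l < (k : ℝ) * t := by
      have : (p - M * l) / t < k := by rw [hk]; push_cast; linarith
      calc p - M * l = ((p - M * l) / t) * t := by field_simp
        _ < k * t := mul_lt_mul_of_pos_right this htp
    have hkt2 : (k : ℝ) * t ≤ p - M * l + t := by
      have hkle : (k : ℝ) ≤ (p - M * l) / t + 1 := by rw [hk]; push_cast; linarith
      calc (k : ℝ) * t ≤ ((p - M * l) / t + 1) * t :=
            mul_le_mul_of_nonneg_right hkle htp.le
        _ = p - M * l + t := by
            rw [add_mul, div_mul_cancel₀ _ htp.ne', one_mul]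
    refine ⟨M * l + k * t, ⟨M + k.toNat * n₀, k.toNat * m₀, ?_⟩, ?_, ?_⟩
    · have hk' : ((k.toNat : ℕ) : ℝ) = (k : ℝ) := by exact_mod_cast Int.toNat_of_nonneg hknn
      push_cast
      rw [hk', ht]; ring
    · linarith
    · have : |t| = t := abs_of_pos htp
      linarith

theorem dense_semigroup_of_two_reals (a b : ℝ) (ha : a < 0) (hb : 1 < b)
    (hneg : Real.log (-a) / Real.log b < 0)
    (hirr : Irrational (Real.log (-a) / Real.log b)) :
    Dense {x : ℝ | ∃ m n : ℕ, x = a ^ m * b ^ n} := by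
  have hc : 0 < -a := by linarith
  set L := Real.log b with hLdef
  set l := Real.log (-a) with hldef
  have hL : 0 < L := Real.log_pos hb
  have hl : l < 0 := by
    by_contra h
    push_neg at h
    have : 0 ≤ l / L := div_nonneg h hL.le
    linarith
  have hl2 : 2 * l < 0 := by linarith
  have hirr2 : Irrational ((2 * l) / L) := by
    have : ((2 : ℚ) : ℝ) * (l / L) = (2 * l) / L := by push_cast; ring
    rw [← this]
    exact hirr.ratCast_mul (by norm_num)
  have hD := dense_comb hL hl2 hirr2
  rw [Metric.dense_iff]
  intro x r hr
  have hel : Real.exp l = -a := Real.exp_log hc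
  have heL : Real.exp L = b := Real.exp_log (by linarith)
  have hexp : ∀ m n : ℕ, a ^ (2 * m) * b ^ n = Real.exp ((n : ℝ) * L + (m : ℝ) * (2 * l)) := by
    intro m n
    have h1 : a ^ 2 = Real.exp (2 * l) := by
      rw [two_mul, Real.exp_add, hel]; ring
    rw [pow_mul, h1, ← heL]
    rw [← Real.exp_nat_mul, ← Real.exp_nat_mul]
    rw [← Real.exp_add, Real.exp_eq_exp]
    ring
  rcases le_or_gt 0 x with hx | hx
  · -- positive approximant
    set c₁ := max x ((x + r) / 2) with hc₁
    have hc₁pos : 0 < c₁ := lt_max_of_lt_right (by linarith)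
    have hc₁lt : c₁ < x + r := max_lt (by linarith) (by linarith)
    obtain ⟨u, ⟨m, n, hu⟩, hu1, hu2⟩ := hD.exists_between (Real.log_lt_log hc₁pos hc₁lt)
    refine ⟨a ^ (2 * m) * b ^ n, ?_, ⟨2 * m, n, rfl⟩⟩
    rw [Metric.mem_ball, Real.dist_eq, hexp m n, ← hu]
    have h1 : c₁ < Real.exp u := by
      calc c₁ = Real.exp (Real.log c₁) := (Real.exp_log hc₁pos).symm
        _ < Real.exp u := Real.exp_lt_exp.mpr hu1
    have h2 : Real.exp u < x + r := by
      calc Real.exp u < Real.exp (Real.log (x + r)) := Real.exp_lt_exp.mpr hu2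
        _ = x + r := Real.exp_log (by linarith)
    have h3 : x ≤ c₁ := le_max_left _ _
    rw [abs_lt]
    constructor <;> linarith
  · -- negative approximant
    set p := -x with hp
    have hppos : 0 < p := by simp [hp]; linarith
    set c₂ := max (p - r) (p / 2) with hc₂
    have hc₂pos : 0 < c₂ := lt_max_of_lt_right (by linarith)
    have hc₂lt : c₂ < p + r := max_lt (by linarith) (by linarith)
    obtain ⟨u, ⟨m, n, hu⟩, hu1, hu2⟩ :=
      hD.exists_between (sub_lt_sub_right (Real.log_lt_log hc₂pos hc₂lt) l)
    refine ⟨a ^ (2 * m + 1) * b ^ n, ?_, ⟨2 * m + 1, n, rfl⟩⟩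
    have hval : a ^ (2 * m + 1) * b ^ n = -Real.exp (l + u) := by
      have : a ^ (2 * m + 1) * b ^ n = a * (a ^ (2 * m) * b ^ n) := by ring
      rw [this, hexp m n, ← hu]
      have hA : a = -Real.exp l := by
        rw [hldef, Real.exp_log hc]; ring
      rw [hA, Real.exp_add]
      ring
    rw [Metric.mem_ball, Real.dist_eq, hval]
    have h1 : c₂ < Real.exp (l + u) := by
      calc c₂ = Real.exp (Real.log c₂) := (Real.exp_log hc₂pos).symm
        _ < Real.exp (l + u) := Real.exp_lt_exp.mpr (by linarith)
    have h2 : Real.exp (l + u) < p + r := by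
      calc Real.exp (l + u) < Real.exp (Real.log (p + r)) :=
            Real.exp_lt_exp.mpr (by linarith)
        _ = p + r := Real.exp_log (by linarith)
    have h3 : p - r ≤ c₂ := le_max_left _ _
    rw [abs_lt]
    constructor <;> [linarith; linarith]
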